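/- Let κ be an uncountable cardinal, let X be a compact metric space, and let E ⊆ X be a subset which, with the subspace topology, is zero-dimensional. Suppose there exist a compact metric space Y and a continuous function h : E → Y which is not uniformly continuous on any subset of E of cardinality κ. Then there exists a continuous function f : E → ℝ, taking values in the Cantor ternary set {∑_{i=0}^∞ u_i/3^{i+1} : each u_i ∈ {0,2}}, which is not uniformly continuous on any subset of E of cardinality κ. -/

import Mathlib

open Cardinal
open Set


section helpers

lemma cantor_term_bound (c : ℝ) (hc : |c| ≤ 2) (k : ℕ) :
    ‖c / 3 ^ (k + 1)‖ ≤ 2 * (1/3 : ℝ) ^ k := by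
  have h1 : (3:ℝ) ^ k ≤ 3 ^ (k+1) := by
    apply pow_le_pow_right₀ (by norm_num) (by omega)
  have h3 : (0:ℝ) < 3 ^ k := by positivity
  have h4 : (0:ℝ) < 3 ^ (k+1) := by positivity
  have heq : ‖c / 3 ^ (k+1)‖ = |c| / 3 ^ (k+1) := by
    rw [Real.norm_eq_abs, abs_div, abs_of_pos h4]
  rw [heq]
  calc |c| / 3 ^ (k+1) ≤ 2 / 3 ^ k := div_le_div₀ (by norm_num) hc h3 h1
    _ = 2 * (1/3:ℝ)^k := by rw [div_pow, one_pow, mul_one_div]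

lemma summable_cantor (u : ℕ → ℝ) (hu : ∀ i, |u i| ≤ 2) :
    Summable fun i => u i / 3 ^ (i + 1) := by
  apply Summable.of_norm_bounded (g := fun i => 2 * (1/3 : ℝ) ^ i)
  · exact (summable_geometric_of_lt_one (by norm_num) (by norm_num)).mul_left 2
  · exact fun i => cantor_term_bound (u i) (hu i) i

end helpers
lemma cf_sep (u v : ℕ → ℝ) (hu : ∀ i, u i = 0 ∨ u i = 2) (hv : ∀ i, v i = 0 ∨ v i = 2)
    (k : ℕ) (hk : u k ≠ v k) :
    1 / 3 ^ (k + 1) ≤ |(∑' i, u i / 3 ^ (i + 1)) - ∑' i, v i / 3 ^ (i + 1)| := by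
  have habs : ∀ (w : ℕ → ℝ), (∀ i, w i = 0 ∨ w i = 2) → ∀ i, |w i| ≤ 2 := by
    intro w hw i; rcases hw i with h | h <;> rw [h] <;> norm_num
  have hsu := summable_cantor u (habs u hu)
  have hsv := summable_cantor v (habs v hv)
  set w : ℕ → ℝ := fun i => (u i - v i) / 3 ^ (i + 1) with hwdef
  have hsw : Summable w := by
    have := hsu.sub hsv
    simpa [hwdef, sub_div] using this
  have hΔ : (∑' i, u i / 3 ^ (i + 1)) - ∑' i, v i / 3 ^ (i + 1) = ∑' i, w i := by
    rw [← Summable.tsum_sub hsu hsv]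
    congr 1; funext i; simp [hwdef, sub_div]
  have hex : ∃ i, u i ≠ v i := ⟨k, hk⟩
  set m := Nat.find hex with hmdef
  have hmk : m ≤ k := Nat.find_min' hex hk
  have hmne : u m ≠ v m := Nat.find_spec hex
  have hzero : ∀ j < m, w j = 0 := by
    intro j hj
    have := Nat.find_min hex hj
    simp only [ne_eq, not_not] at this
    simp [hwdef, this]
  -- split sum
  have hsplit1 : ∑' i, w i = ∑' i, w (i + m) := by
    rw [← Summable.sum_add_tsum_nat_add m hsw]
    rw [Finset.sum_eq_zero (fun j hj => hzero j (Finset.mem_range.1 hj)), zero_add]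
  have hsw2 : Summable fun i => w (i + m) := (summable_nat_add_iff m).2 hsw
  have hsplit2 : ∑' i, w (i + m) = w m + ∑' i, w (i + 1 + m) := by
    rw [Summable.tsum_eq_zero_add hsw2]; simp
  -- tail bound
  have htail : |∑' i, w (i + 1 + m)| ≤ 1 / 3 ^ (m + 1) := by
    have hb : ∀ i, ‖w (i + 1 + m)‖ ≤ (2 / 3 ^ (m + 2)) * (1/3:ℝ) ^ i := by
      intro i
      have h1 : |u (i+1+m) - v (i+1+m)| ≤ 2 := by
        rcases hu (i+1+m) with h | h <;> rcases hv (i+1+m) with h' | h' <;>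
          rw [h, h'] <;> norm_num
      have h2 : ((3:ℝ)) ^ (i + 1 + m + 1) = 3 ^ (m + 2) * 3 ^ i := by ring
      have h3 : (0:ℝ) < 3 ^ (i + 1 + m + 1) := by positivity
      rw [Real.norm_eq_abs, hwdef]
      simp only [abs_div, abs_of_pos h3]
      rw [h2]
      rw [div_le_iff₀ (by positivity)] at *
      calc |u (i+1+m) - v (i+1+m)| ≤ 2 := h1
        _ ≤ 2 / 3 ^ (m+2) * (1/3)^i * (3 ^ (m+2) * 3 ^ i) := by
            rw [div_pow, one_pow]
            field_simp
            exact le_refl 1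
    have hgs : HasSum (fun i => (2 / 3 ^ (m + 2)) * (1/3:ℝ) ^ i) (1 / 3 ^ (m+1)) := by
      have := hasSum_geometric_of_lt_one (r := (1/3:ℝ)) (by norm_num) (by norm_num)
      have h2 := this.mul_left (2 / 3 ^ (m + 2))
      convert h2 using 1
      · rfl
      rw [show (1:ℝ) - 1/3 = 2/3 by norm_num]
      rw [show ((2:ℝ)/3)⁻¹ = 3/2 by norm_num]
      field_simp
      ring
    calc |∑' i, w (i + 1 + m)| = ‖∑' i, w (i + 1 + m)‖ := (Real.norm_eq_abs _).symm
      _ ≤ 1 / 3 ^ (m+1) := tsum_of_norm_bounded hgs hb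
  have hwm : |w m| = 2 / 3 ^ (m + 1) := by
    have h3 : (0:ℝ) < 3 ^ (m+1) := by positivity
    have hdiff : |u m - v m| = 2 := by
      rcases hu m with h | h <;> rcases hv m with h' | h'
      · exact absurd (h.trans h'.symm) hmne
      · rw [h, h']; norm_num
      · rw [h, h']; norm_num
      · exact absurd (h.trans h'.symm) hmne
    rw [hwdef]
    simp only [abs_div, abs_of_pos h3, hdiff]
  -- conclude
  rw [hΔ, hsplit1, hsplit2]
  have habs2 : |w m| - |∑' i, w (i + 1 + m)| ≤ |w m + ∑' i, w (i + 1 + m)| := by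
    have := abs_add_le (w m + ∑' i, w (i + 1 + m)) (-(∑' i, w (i + 1 + m)))
    simp only [add_neg_cancel_right, abs_neg] at this
    linarith
  have hmono : (1:ℝ) / 3 ^ (k+1) ≤ 1 / 3 ^ (m+1) := by
    apply one_div_le_one_div_of_le (by positivity)
    apply pow_le_pow_right₀ (by norm_num) (by omega)
  rw [hwm] at habs2
  have hr : (2:ℝ) / 3 ^ (m+1) = 2 * (1 / 3 ^ (m+1)) := by ring
  linarith
lemma clopen_sep {T : Type} [TopologicalSpace T] [SecondCountableTopology T]
    {B : Set (Set T)} (hBclopen : ∀ s ∈ B, IsClopen s)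
    (hbasis : TopologicalSpace.IsTopologicalBasis B)
    {C D : Set T} (hCD : Disjoint C D) (hC : IsClosed C) (hD : IsClosed D) :
    ∃ U : Set T, IsClopen U ∧ C ⊆ U ∧ Disjoint U D := by
  classical
  have hpt : ∀ x : T, ∃ s, s ∈ B ∧ x ∈ s ∧ (Disjoint s C ∨ Disjoint s D) := by
    intro x
    have hx : x ∉ C ∨ x ∉ D := by
      by_contra hcon
      push_neg at hcon
      exact disjoint_left.1 hCD hcon.1 hcon.2
    rcases hx with hx | hx
    · obtain ⟨s, hsB, hxs, hss⟩ := hbasis.exists_subset_of_mem_open hx hC.isOpen_compl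
      exact ⟨s, hsB, hxs, Or.inl (disjoint_left.2 fun a ha => hss ha)⟩
    · obtain ⟨s, hsB, hxs, hss⟩ := hbasis.exists_subset_of_mem_open hx hD.isOpen_compl
      exact ⟨s, hsB, hxs, Or.inr (disjoint_left.2 fun a ha => hss ha)⟩
  choose s hsB hxs hsd using hpt
  obtain ⟨T', hT'c, hT'u⟩ := TopologicalSpace.isOpen_iUnion_countable s
    (fun x => (hBclopen _ (hsB x)).isOpen)
  have hcov : ⋃ x ∈ T', s x = Set.univ := by
    rw [hT'u]
    exact eq_univ_of_forall fun x => mem_iUnion.2 ⟨x, hxs x⟩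
  rcases T'.eq_empty_or_nonempty with hTe | hTne
  · refine ⟨∅, isClopen_empty, ?_, disjoint_bot_left⟩
    have huniv : (Set.univ : Set T) = ∅ := by rw [← hcov, hTe]; simp
    intro x _
    exact absurd (mem_univ x) (huniv ▸ notMem_empty x)
  obtain ⟨e, he⟩ := hT'c.exists_eq_range hTne
  set W : ℕ → Set T := fun n => s (e n) with hWdef
  have hWclopen : ∀ n, IsClopen (W n) := fun n => hBclopen _ (hsB (e n))
  have hWcov : ∀ x : T, ∃ n, x ∈ W n := by
    intro x
    have : x ∈ ⋃ y ∈ T', s y := hcov ▸ mem_univ x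
    rw [he] at this
    obtain ⟨n, hxn⟩ : ∃ n, x ∈ s (e n) := by simpa using this
    exact ⟨n, hxn⟩
  have hWd : ∀ n, Disjoint (W n) C ∨ Disjoint (W n) D := fun n => hsd (e n)
  set V : ℕ → Set T := fun n => W n \ ⋃ m ∈ Finset.range n, W m with hVdef
  have hVclopen : ∀ n, IsClopen (V n) :=
    fun n => (hWclopen n).diff (isClopen_biUnion_finset (fun m _ => hWclopen m))
  have hVcov : ∀ x : T, ∃ n, x ∈ V n := by
    intro x
    refine ⟨Nat.find (hWcov x), Nat.find_spec (hWcov x), ?_⟩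
    intro hmem
    simp only [Finset.mem_range, mem_iUnion] at hmem
    obtain ⟨m, hmn, hxm⟩ := hmem
    exact Nat.find_min (hWcov x) hmn hxm
  have hVdisj : ∀ m n, m < n → Disjoint (V m) (V n) := by
    intro m n hmn
    rw [disjoint_left]
    intro x hxm hxn
    exact hxn.2 (mem_iUnion.2 ⟨m, mem_iUnion.2 ⟨Finset.mem_range.2 hmn, hxm.1⟩⟩)
  refine ⟨⋃ (n : ℕ) (_ : Disjoint (W n) D), V n, ⟨?_, ?_⟩, ?_, ?_⟩
  · -- closed: complement is the union over the others
    have hcompl : (⋃ (n : ℕ) (_ : Disjoint (W n) D), V n)ᶜ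
        = ⋃ (n : ℕ) (_ : ¬ Disjoint (W n) D), V n := by
      ext x
      simp only [mem_compl_iff, mem_iUnion]
      constructor
      · intro hx
        obtain ⟨n, hn⟩ := hVcov x
        refine ⟨n, ?_, hn⟩
        intro hd
        exact hx ⟨n, hd, hn⟩
      · rintro ⟨n, hnd, hxn⟩ ⟨n', hd', hxn'⟩
        rcases lt_trichotomy n n' with h | h | h
        · exact disjoint_left.1 (hVdisj n n' h) hxn hxn'
        · exact hnd (h ▸ hd')
        · exact disjoint_left.1 (hVdisj n' n h) hxn' hxn
    rw [← isOpen_compl_iff, hcompl]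
    exact isOpen_iUnion fun n => isOpen_iUnion fun _ => (hVclopen n).isOpen
  · exact isOpen_iUnion fun n => isOpen_iUnion fun _ => (hVclopen n).isOpen
  · -- C ⊆ U
    intro x hxC
    obtain ⟨n, hn⟩ := hVcov x
    have hnd : Disjoint (W n) D := by
      rcases hWd n with h | h
      · exact absurd hxC (disjoint_left.1 h hn.1)
      · exact h
    exact mem_iUnion.2 ⟨n, mem_iUnion.2 ⟨hnd, hn⟩⟩
  · -- disjoint from D
    rw [disjoint_left]
    rintro x hx hxD
    simp only [mem_iUnion] at hx
    obtain ⟨n, hnd, hxn⟩ := hx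
    exact disjoint_left.1 hnd hxn.1 hxD

/-- The Cantor ternary set: all sums `∑ uᵢ/3^(i+1)` with each `uᵢ ∈ {0, 2}`. -/
def cantorTernarySet : Set ℝ :=
  {x | ∃ u : ℕ → ℝ, (∀ i, u i = 0 ∨ u i = 2) ∧ x = ∑' i, u i / 3 ^ (i + 1)}

/-- If `E` is a zero-dimensional subset of a compact metric space `X` and there is a
continuous function from `E` to some compact metric space `Y` which is not uniformly
continuous on any subset of `E` of cardinality `κ`, then there is such a function from `E`
to `ℝ` taking values in the Cantor ternary set. -/
theorem stmt_3 (κ : Cardinal.{0}) (hκ : aleph 0 < κ)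
    (X : Type) [MetricSpace X] [CompactSpace X] (E : Set X)
    (hzerodim : ∃ B : Set (Set E), (∀ s ∈ B, IsClopen s) ∧
      TopologicalSpace.IsTopologicalBasis B)
    (hex : ∃ (Y : Type) (_ : MetricSpace Y) (_ : CompactSpace Y) (h : E → Y),
      Continuous h ∧ ∀ A : Set E, #A = κ → ¬ UniformContinuousOn h A) :
    ∃ f : E → ℝ, Continuous f ∧ (∀ x, f x ∈ cantorTernarySet) ∧
      ∀ A : Set E, #A = κ → ¬ UniformContinuousOn f A := by
  classical
  have h0cantor : (0:ℝ) ∈ cantorTernarySet := ⟨fun _ => 0, fun _ => Or.inl rfl, by simp⟩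
  by_cases hA0 : ∃ A : Set E, #A = κ
  swap
  · exact ⟨fun _ => 0, continuous_const, fun _ => h0cantor,
      fun A hA _ => hA0 ⟨A, hA⟩⟩
  obtain ⟨B, hBclopen, hbasis⟩ := hzerodim
  obtain ⟨Y, _, _, h, hcont, hhuc⟩ := hex
  -- nonemptiness
  have hκ0 : κ ≠ 0 := (lt_of_le_of_lt (zero_le ..) hκ).ne'
  obtain ⟨A0, hA0'⟩ := hA0
  have hAne : A0.Nonempty := by
    rw [Set.nonempty_iff_ne_empty]
    rintro rfl
    rw [Cardinal.mk_emptyCollection] at hA0'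
    exact hκ0 hA0'.symm
  haveI hYne : Nonempty Y := ⟨h hAne.choose⟩
  obtain ⟨y, hy⟩ := TopologicalSpace.exists_dense_seq Y
  set g : ℕ → E → ℝ := fun n x => dist (h x) (y n) with hgdef
  have hgcont : ∀ n, Continuous (g n) := fun n => hcont.dist continuous_const
  set R : ℝ := Metric.diam (Set.univ : Set Y) with hRdef
  have hgR : ∀ n x, g n x ≤ R := fun n x =>
    Metric.dist_le_diam_of_mem isCompact_univ.isBounded (mem_univ _) (mem_univ _)
  have hg0 : ∀ n x, 0 ≤ g n x := fun n x => dist_nonneg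
  -- Step A: if all coordinates g n are UC on A, so is h
  have stepA : ∀ A : Set E, (∀ n, UniformContinuousOn (g n) A) →
      UniformContinuousOn h A := by
    intro A hguc
    rw [Metric.uniformContinuousOn_iff]
    intro ε hε
    have hcov : (Set.univ : Set Y) ⊆ ⋃ n, Metric.ball (y n) (ε/4) := by
      intro z _
      obtain ⟨n, hn⟩ := hy.exists_dist_lt z (show (0:ℝ) < ε/4 by linarith)
      exact mem_iUnion.2 ⟨n, by simpa [Metric.mem_ball, dist_comm] using hn⟩
    obtain ⟨F, hF⟩ := isCompact_univ.elim_finite_subcover _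
      (fun n => Metric.isOpen_ball) hcov
    have hFne : F.Nonempty := by
      rcases Finset.eq_empty_or_nonempty F with rfl | hne
      · exfalso
        obtain ⟨z⟩ := hYne
        have := hF (mem_univ z)
        simpa using this
      · exact hne
    have hδn : ∀ n, ∃ δ > 0, ∀ x ∈ A, ∀ x' ∈ A, dist x x' < δ →
        dist (g n x) (g n x') < ε/4 :=
      fun n => Metric.uniformContinuousOn_iff.1 (hguc n) (ε/4) (by linarith)
    choose δf hδfpos hδf using hδn
    refine ⟨F.inf' hFne δf, ?_, ?_⟩
    · exact (Finset.lt_inf'_iff hFne).2 fun n _ => hδfpos n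
    intro x hx x' hx' hd
    have hmem := hF (mem_univ (h x))
    simp only [mem_iUnion, Metric.mem_ball] at hmem
    obtain ⟨n, hnF, hball⟩ := hmem
    have h1 : g n x < ε/4 := by simpa [hgdef] using hball
    have hδle : F.inf' hFne δf ≤ δf n := Finset.inf'_le _ hnF
    have h2 : dist (g n x) (g n x') < ε/4 := hδf n x hx x' hx' (lt_of_lt_of_le hd hδle)
    rw [Real.dist_eq] at h2
    have h3 : g n x' < ε/2 := by
      rcases abs_lt.1 h2 with ⟨hl, hr⟩
      linarith
    calc dist (h x) (h x') ≤ dist (h x) (y n) + dist (y n) (h x') := dist_triangle _ _ _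
      _ = g n x + g n x' := by rw [dist_comm (y n)]
      _ < ε := by linarith
  -- the clopen separating sets
  have hmpos : ∀ m : ℕ, (0:ℝ) < (m:ℝ) + 1 := fun m => by positivity
  have hsep : ∀ p : ℕ × ℕ × ℕ, ∃ U : Set E, IsClopen U ∧
      {x | g p.1 x ≤ (p.2.1 : ℝ) / ((p.2.2 : ℝ) + 1)} ⊆ U ∧
      Disjoint U {x | ((p.2.1 : ℝ) + 1) / ((p.2.2 : ℝ) + 1) ≤ g p.1 x} := by
    rintro ⟨n, i, m⟩
    apply clopen_sep hBclopen hbasis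
    · rw [disjoint_left]
      intro x hx hx'
      simp only [mem_setOf_eq] at hx hx'
      have hlt : (i:ℝ) / ((m:ℝ)+1) < ((i:ℝ)+1) / ((m:ℝ)+1) := by
        apply div_lt_div_of_pos_right (by linarith) (hmpos m)
      linarith
    · exact IsClosed.preimage (hgcont n) isClosed_Iic
    · exact IsClosed.preimage (hgcont n) isClosed_Ici
  choose U hUclopen hUC hUD using hsep
  set e : ℕ ≃ ℕ × ℕ × ℕ := (Denumerable.eqv (ℕ × ℕ × ℕ)).symm with hedef
  set V : ℕ → Set E := fun k => U (e k) with hVdef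
  set dig : E → ℕ → ℝ := fun x k => if x ∈ V k then 2 else 0 with hdigdef
  have hdig01 : ∀ x k, dig x k = 0 ∨ dig x k = 2 := by
    intro x k
    by_cases hx : x ∈ V k <;> simp [hdigdef, hx]
  have hdigabs : ∀ x k, |dig x k| ≤ 2 := by
    intro x k
    rcases hdig01 x k with h' | h' <;> rw [h'] <;> norm_num
  set f : E → ℝ := fun x => ∑' k, dig x k / 3 ^ (k + 1) with hfdef
  refine ⟨f, ?_, fun x => ⟨dig x, hdig01 x, rfl⟩, ?_⟩
  · -- continuity
    apply continuous_tsum (u := fun k => 2 * (1/3:ℝ) ^ k)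
    · intro k
      have hb : Continuous ((V k).boolIndicator) :=
        (continuous_boolIndicator_iff_isClopen _).2 (hUclopen (e k))
      have hcomp : (fun x => dig x k / 3 ^ (k+1)) =
          (fun b : Bool => (if b then (2:ℝ) else 0) / 3 ^ (k+1)) ∘ (V k).boolIndicator := by
        funext x
        by_cases hx : x ∈ V k <;> simp [hdigdef, Set.boolIndicator, hx]
      rw [hcomp]
      exact Continuous.comp continuous_of_discreteTopology hb
    · exact (summable_geometric_of_lt_one (by norm_num) (by norm_num)).mul_left 2
    · exact fun k x => cantor_term_bound _ (hdigabs x k) k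
  · -- not uniformly continuous on any set of cardinality κ
    intro A hAκ huc
    apply hhuc A hAκ
    apply stepA
    have digstable : ∀ k : ℕ, ∃ δ > 0, ∀ x ∈ A, ∀ x' ∈ A, dist x x' < δ →
        (x ∈ V k ↔ x' ∈ V k) := by
      intro k
      obtain ⟨δ, hδpos, hδ⟩ := Metric.uniformContinuousOn_iff.1 huc (1 / 3 ^ (k+1))
        (by positivity)
      refine ⟨δ, hδpos, fun x hx x' hx' hd => ?_⟩
      by_contra hne
      have hdigne : dig x k ≠ dig x' k := by
        intro heq
        apply hne
        by_cases h1 : x ∈ V k <;> by_cases h2 : x' ∈ V k <;>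
          simp [hdigdef, h1, h2] at heq ⊢
      have hsep2 := cf_sep (dig x) (dig x') (hdig01 x) (hdig01 x') k hdigne
      have hlt := hδ x hx x' hx' hd
      rw [Real.dist_eq] at hlt
      simp only [hfdef] at hlt
      linarith
    choose δd hδdpos hδd using digstable
    intro n
    rw [Metric.uniformContinuousOn_iff]
    intro ε hε
    set m : ℕ := ⌈2/ε⌉₊ with hmdef
    have hm : 2 / ((m:ℝ)+1) < ε := by
      rw [div_lt_iff₀ (hmpos m)]
      have h1 : 2/ε ≤ (m:ℝ) := Nat.le_ceil _
      rw [div_le_iff₀ hε] at h1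
      nlinarith
    set N : ℕ := ⌈R * ((m:ℝ)+1)⌉₊ with hNdef
    have hrange : (Finset.range (N+1)).Nonempty := ⟨0, Finset.mem_range.2 (by omega)⟩
    set δ := (Finset.range (N+1)).inf' hrange (fun i => δd (e.symm (n, i, m))) with hδdef
    refine ⟨δ, (Finset.lt_inf'_iff hrange).2 fun i _ => hδdpos _, ?_⟩
    intro x hx x' hx' hd
    rw [Real.dist_eq]
    by_contra hge
    push_neg at hge
    have key : ∀ z ∈ A, ∀ z' ∈ A, dist z z' < δ → g n z + ε ≤ g n z' → False := by
      intro z hz z' hz' hdz hgz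
      set i : ℕ := ⌈g n z * ((m:ℝ)+1)⌉₊ with hidef
      have hiN : i ≤ N :=
        Nat.ceil_le_ceil (mul_le_mul_of_nonneg_right (hgR n z) (by linarith [hmpos m]))
      set p : ℕ × ℕ × ℕ := (n, i, m) with hpdef
      set k := e.symm p with hkdef
      have hek : e k = p := e.apply_symm_apply p
      have hzC : z ∈ U p := by
        apply hUC p
        show g p.1 z ≤ (p.2.1 : ℝ) / ((p.2.2 : ℝ) + 1)
        rw [le_div_iff₀ (hmpos m)]
        exact Nat.le_ceil _
      have hz'D : z' ∉ U p := by
        intro hmem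
        apply disjoint_left.1 (hUD p) hmem
        show ((p.2.1 : ℝ) + 1) / ((p.2.2 : ℝ) + 1) ≤ g p.1 z'
        have h1 : (i:ℝ) < g n z * ((m:ℝ)+1) + 1 := Nat.ceil_lt_add_one (by positivity)
        have h2 : (2:ℝ) < ε * ((m:ℝ)+1) := (div_lt_iff₀ (hmpos m)).1 hm
        have h3 : (g n z + ε) * ((m:ℝ)+1) ≤ g n z' * ((m:ℝ)+1) :=
          mul_le_mul_of_nonneg_right hgz (by linarith [hmpos m])
        rw [div_le_iff₀ (hmpos m)]
        nlinarith
      have hδk : δ ≤ δd k := by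
        rw [hδdef, hkdef, hpdef]
        exact Finset.inf'_le _ (Finset.mem_range.2 (by omega : i < N+1))
      have hiff := hδd k z hz z' hz' (lt_of_lt_of_le hdz hδk)
      simp only [hVdef, hek] at hiff
      exact hz'D (hiff.1 hzC)
    rcases le_total (g n x) (g n x') with hle | hle
    · have hord : g n x + ε ≤ g n x' := by
        rw [abs_of_nonpos (by linarith)] at hge
        linarith
      exact key x hx x' hx' hd hord
    · have hord : g n x' + ε ≤ g n x := by
        rw [abs_of_nonneg (by linarith)] at hge
        linarith
      exact key x' hx' x hx (by rwa [dist_comm]) hord
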